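/- Let F : ℝ^d → ℝ be differentiable, monotone (x ≤ y coordinatewise implies F(x) ≤ F(y)) and concave along nonnegative directions (F(y) ≤ F(x) + ⟨∇F(x), y - x⟩ whenever x ≤ y). Then for any x, x* in the domain with x ≥ 0 and ∇F(x) ≥ 0 componentwise behavior as implied by DR-submodularity, F(x*) - F(x) ≤ ⟨∇F(x), x*⟩, using F(x*) - F(x) ≤ F(x* ∨ x) - F(x) ≤ ⟨∇F(x), (x* - x) ∨ 0⟩ ≤ ⟨∇F(x), x*⟩. -/

import Mathlib

open RealInnerProductSpace

theorem stmt_10 (d : ℕ) (F : EuclideanSpace ℝ (Fin d) → ℝ)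
    (gradF : EuclideanSpace ℝ (Fin d) → EuclideanSpace ℝ (Fin d))
    (hmono : ∀ x y : EuclideanSpace ℝ (Fin d), (∀ i, x i ≤ y i) → F x ≤ F y)
    (hconc : ∀ x y : EuclideanSpace ℝ (Fin d), (∀ i, x i ≤ y i) →
      F y ≤ F x + ⟪gradF x, y - x⟫)
    (x xstar : EuclideanSpace ℝ (Fin d))
    (hx : ∀ i, 0 ≤ x i) (hxstar : ∀ i, 0 ≤ xstar i)
    (hgrad : ∀ i, 0 ≤ gradF x i) :
    F xstar - F x ≤ ⟪gradF x, xstar⟫ := by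
  set z : EuclideanSpace ℝ (Fin d) := WithLp.toLp 2 (fun i => max (x i) (xstar i)) with hz
  have h1 : F xstar ≤ F z := hmono _ _ (fun i => le_max_right _ _)
  have h2 : F z ≤ F x + ⟪gradF x, z - x⟫ := hconc _ _ (fun i => le_max_left _ _)
  have h3 : ⟪gradF x, z - x⟫ ≤ ⟪gradF x, xstar⟫ := by
    simp only [PiLp.inner_apply, RCLike.inner_apply, conj_trivial]
    apply Finset.sum_le_sum
    intro i _
    have : (z - x) i ≤ xstar i := by
      simp only [PiLp.sub_apply, hz]
      rcases le_total (xstar i) (x i) with h | h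
      · simp [max_eq_left h]; exact hxstar i
      · simp [max_eq_right h]; linarith [hx i]
    exact mul_le_mul_of_nonneg_right this (hgrad i)
  linarith
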